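/- For every k ≥ 2, the standard example S_k has dimension exactly k. -/

import Mathlib

/-- `L` is a realizer of the order `le`: a family of linear extensions of `le`
whose intersection is `le`. -/
def IsRealizer {X : Type*} (le : X → X → Prop) {d : ℕ} (L : Fin d → X → X → Prop) : Prop :=
  (∀ i, IsLinearOrder X (L i)) ∧ (∀ (i) (x y : X), le x y → L i x y) ∧
    (∀ x y : X, le x y ↔ ∀ i, L i x y)

/-- The (Dushnik–Miller) dimension of a poset: the least size of a realizer. -/
noncomputable def orderDim (X : Type*) [PartialOrder X] : ℕ :=
  sInf {d : ℕ | ∃ L : Fin d → X → X → Prop, IsRealizer (· ≤ ·) L}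

/-- `L` together with the boolean function `φ` is a boolean realizer of `le`. -/
def IsBooleanRealizer {X : Type*} (le : X → X → Prop) {d : ℕ}
    (L : Fin d → X → X → Prop) (φ : (Fin d → Prop) → Prop) : Prop :=
  (∀ i, IsLinearOrder X (L i)) ∧ ∀ x y : X, le x y ↔ φ (fun i => L i x y)

/-- Boolean dimension of a relation. -/
noncomputable def booleanDimRel {X : Type*} (le : X → X → Prop) : ℕ :=
  sInf {d : ℕ | ∃ (L : Fin d → X → X → Prop) (φ : (Fin d → Prop) → Prop),
    IsBooleanRealizer le L φ}

/-- Boolean dimension of a poset. -/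
noncomputable def booleanDim (X : Type*) [PartialOrder X] : ℕ :=
  booleanDimRel ((· ≤ ·) : X → X → Prop)

/-- A partial linear extension of `le`: a linear order on a subset of `X`
extending the restriction of `le` to that subset. -/
structure PLE {X : Type*} (le : X → X → Prop) where
  dom : Set X
  rel : X → X → Prop
  mem_left : ∀ x y, rel x y → x ∈ dom
  mem_right : ∀ x y, rel x y → y ∈ dom
  refl : ∀ x ∈ dom, rel x x
  antisymm : ∀ x y, rel x y → rel y x → x = y
  trans : ∀ x y z, rel x y → rel y z → rel x z
  total : ∀ x ∈ dom, ∀ y ∈ dom, rel x y ∨ rel y x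
  le_imp : ∀ x ∈ dom, ∀ y ∈ dom, le x y → rel x y

/-- A family of partial linear extensions is a local realizer of `le`:
`x ≤ y` iff no member reverses the pair strictly. -/
def IsLocalRealizer {X : Type*} {le : X → X → Prop} {ι : Type*} (L : ι → PLE le) : Prop :=
  ∀ x y : X, le x y ↔ ∀ i, ¬ ((L i).rel y x ∧ y ≠ x)

/-- Every element of `X` occurs in the domain of at most `d` members of the family. -/
def WidthAtMost {X : Type*} {le : X → X → Prop} {ι : Type*} (L : ι → PLE le) (d : ℕ) : Prop :=
  ∀ x : X, ({i : ι | x ∈ (L i).dom}).ncard ≤ d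

/-- Local dimension of a poset: the least width of a local realizer. -/
noncomputable def localDim (X : Type*) [PartialOrder X] : ℕ :=
  sInf {d : ℕ | ∃ (t : ℕ) (L : Fin t → PLE ((· ≤ ·) : X → X → Prop)),
    IsLocalRealizer L ∧ WidthAtMost L d}

/-- Underlying order of the standard example `S_k`:
`a_i = inl i` are minimal, `b_j = inr j` are maximal, `a_i < b_j ↔ i ≠ j`. -/
def stdLE (k : ℕ) : Fin k ⊕ Fin k → Fin k ⊕ Fin k → Prop
  | Sum.inl i, Sum.inl j => i = j
  | Sum.inl i, Sum.inr j => i ≠ j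
  | Sum.inr i, Sum.inr j => i = j
  | Sum.inr _, Sum.inl _ => False

/-- The standard example `S_k` as a type. -/
def StdEx (k : ℕ) : Type := Fin k ⊕ Fin k

instance (k : ℕ) : PartialOrder (StdEx k) where
  le := stdLE k
  le_refl x := by rcases x with i | i <;> simp [stdLE]
  le_trans x y z hxy hyz := by
    rcases x with i | i <;> rcases y with j | j <;> rcases z with l | l <;>
      simp_all [stdLE]
  le_antisymm x y hxy hyx := by
    rcases x with i | i <;> rcases y with j | j <;> simp_all [stdLE] <;> rfl

instance (k : ℕ) : Fintype (StdEx k) := inferInstanceAs (Fintype (Fin k ⊕ Fin k))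



/-- Injection used to build the `t`-th linear extension of `S_k`. -/
def stdF (k : ℕ) (t : Fin k) : StdEx k → ℕ
  | Sum.inl i => if i = t then 2*k+1 else i.val
  | Sum.inr j => if j = t then 2*k else 2*k+2+j.val

lemma stdF_inj (k : ℕ) (t : Fin k) : Function.Injective (stdF k t) := by
  intro x y h
  rcases x with i | i <;> rcases y with j | j <;>
    simp only [stdF] at h <;> have hi' := i.isLt <;> have hj' := j.isLt <;>
    split_ifs at h with h1 h2 h2 <;>
    first
      | (subst_vars; rfl)
      | omega
      | (congr 1; exact Fin.ext h)
      | (congr 1; omega)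

lemma stdF_mono (k : ℕ) (t : Fin k) (x y : StdEx k) (h : stdLE k x y) :
    stdF k t x ≤ stdF k t y := by
  rcases x with i | i <;> rcases y with j | j <;>
    simp only [stdLE, stdF] at * <;> have hi' := i.isLt <;> have hj' := j.isLt <;>
    first
      | (subst_vars; omega)
      | (split_ifs with h1 h2 h2 <;> first | omega | (exfalso; apply h; omega) |
          (exfalso; subst_vars; exact h rfl) | skip)
  all_goals omega

/-- For every `k ≥ 2`, the standard example `S_k` has dimension
exactly `k`. -/
theorem dim_standard_example (k : ℕ) (hk : 2 ≤ k) : orderDim (StdEx k) = k := by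
  have hle : ∀ x y : StdEx k, (x ≤ y) = stdLE k x y := fun _ _ => rfl
  have hmem : k ∈ {d : ℕ | ∃ L : Fin d → StdEx k → StdEx k → Prop, IsRealizer (· ≤ ·) L} := by
    refine ⟨fun t x y => stdF k t x ≤ stdF k t y, ?_, ?_, ?_⟩
    · intro t
      exact { refl := fun x => le_refl _
              trans := fun a b c h1 h2 => le_trans h1 h2
              antisymm := fun a b h1 h2 => stdF_inj k t (le_antisymm h1 h2)
              total := fun a b => Nat.le_total _ _ }
    · intro t x y h
      exact stdF_mono k t x y h
    · intro x y
      constructor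
      · intro h t; exact stdF_mono k t x y h
      · intro h
        show stdLE k x y
        by_contra hc
        rcases x with i | i <;> rcases y with j | j <;> simp only [stdLE] at hc
        · -- a_i vs a_j, i ≠ j : use L i
          have hthis := h i
          simp only [stdF] at hthis
          rw [if_pos trivial, if_neg (fun hh : j = i => hc hh.symm)] at hthis
          have := j.isLt
          omega
        · -- a_i vs b_j with i = j : use L i
          push_neg at hc
          subst hc
          have hthis := h i
          simp only [stdF] at hthis
          rw [if_pos trivial, if_pos trivial] at hthis
          omega
        · -- b_i vs a_j : always false
          clear hc
          rcases eq_or_ne i j with rfl | hij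
          · obtain ⟨t, ht⟩ : ∃ t : Fin k, t ≠ i := by
              rcases eq_or_ne i ⟨0, by omega⟩ with h0 | h0
              · exact ⟨⟨1, by omega⟩, fun hh => by simp [h0, Fin.ext_iff] at hh⟩
              · exact ⟨⟨0, by omega⟩, fun hh => h0 hh.symm⟩
            have hthis := h t
            simp only [stdF] at hthis
            rw [if_neg (fun hh : i = t => ht hh.symm),
              if_neg (fun hh : i = t => ht hh.symm)] at hthis
            omega
          · have hthis := h i
            simp only [stdF] at hthis
            rw [if_pos trivial, if_neg (fun hh : j = i => hij hh.symm)] at hthis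
            have := j.isLt
            omega
        · -- b_i vs b_j, i ≠ j : use L j
          have hthis := h j
          simp only [stdF] at hthis
          rw [if_neg hc, if_pos trivial] at hthis
          omega
  refine le_antisymm (Nat.sInf_le hmem) (le_csInf ⟨k, hmem⟩ ?_)
  rintro d ⟨L, hlin, hext, hiff⟩
  -- for each j, pick a coordinate reversing (a_j, b_j)
  have key : ∀ j : Fin k, ∃ i : Fin d, L i (Sum.inr j) (Sum.inl j) := by
    intro j
    have hnle : ¬ ∀ i, L i (Sum.inl j) (Sum.inr j) :=
      fun hall => (((hiff _ _).2 hall : stdLE k (Sum.inl j) (Sum.inr j))) rfl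
    push_neg at hnle
    obtain ⟨i, hi⟩ := hnle
    haveI := hlin i
    rcases total_of (L i) (Sum.inr j : StdEx k) (Sum.inl j) with h | h
    · exact ⟨i, h⟩
    · exact absurd h hi
  choose g hg using key
  have hginj : Function.Injective g := by
    intro j1 j2 hgj
    by_contra hne
    set i := g j1
    haveI := hlin i
    have h1 : L i (Sum.inr j1) (Sum.inl j1) := hg j1
    have h2 : L i (Sum.inr j2) (Sum.inl j2) := hgj ▸ hg j2
    have h3 : L i (Sum.inl j1) (Sum.inr j2) := hext i _ _ (hne : stdLE k (Sum.inl j1) (Sum.inr j2))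
    have h4 : L i (Sum.inl j2) (Sum.inr j1) :=
      hext i _ _ ((fun hh => hne hh.symm) : stdLE k (Sum.inl j2) (Sum.inr j1))
    have h5 : L i (Sum.inr j2) (Sum.inl j1) :=
      trans_of (L i) (trans_of (L i) h2 h4) h1
    have : (Sum.inl j1 : StdEx k) = Sum.inr j2 := antisymm_of (L i) h3 h5
    exact Sum.inl_ne_inr this
  calc k = Fintype.card (Fin k) := (Fintype.card_fin k).symm
    _ ≤ Fintype.card (Fin d) := Fintype.card_le_of_injective g hginj
    _ = d := Fintype.card_fin d
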